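/- arXiv:1601.02245 — 2 statements merged into one kernel-verified Lean document; each statement's English description precedes it below -/
import Mathlib

section
/- For every integer N > 2 and every integer m with 0 ≤ m ≤ N, the stepsize ratio r(N,m) = ((2N−1)/(N+1)²)·m + N/((2N−1)(N+1)) satisfies r(N,m) ≠ 1; consequently, for any stepsize h > 0, the ASPA update h' = r(N,m)·h satisfies h' ≠ h, i.e., the stepsize recurrence has no fixed points. -/
/-- The ASPA stepsize ratio: with `N` processors, if `m` of them were
successful, the next stepsize is `r(N,m)` times the current one. -/
noncomputable def aspaRatio (N m : ℝ) : ℝ :=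
  (2 * N - 1) / (N + 1) ^ 2 * m + N / ((2 * N - 1) * (N + 1))

lemma aspa_int_ne (N m : ℤ) (hN : 2 < N) :
    (2 * N - 1) ^ 2 * m + N * (N + 1) ≠ (2 * N - 1) * (N + 1) ^ 2 := by
  intro h
  by_cases h2 : 2 * m ≤ N + 2
  · nlinarith [sq_nonneg (2 * N - 1), sq_nonneg N]
  · push_neg at h2
    nlinarith [sq_nonneg (2 * N - 1), sq_nonneg N]

/-- For every integer `N > 2` and every integer `m` with `0 ≤ m ≤ N`, the
stepsize ratio `r(N,m)` is never `1`; consequently, for any stepsize `h > 0`,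
the ASPA update `h' = r(N,m)·h` satisfies `h' ≠ h`: the recurrence has no
fixed points. -/
theorem aspa_no_fixed_points (N m : ℤ) (hN : 2 < N) (hm0 : 0 ≤ m) (hmN : m ≤ N) :
    aspaRatio N m ≠ 1 ∧ ∀ h : ℝ, 0 < h → aspaRatio N m * h ≠ h := by
  have hNR : (2 : ℝ) < (N : ℝ) := by exact_mod_cast hN
  have h1 : ((N : ℝ) + 1) ≠ 0 := by nlinarith
  have h2 : (2 * (N : ℝ) - 1) ≠ 0 := by nlinarith
  have hr : aspaRatio N m ≠ 1 := by
    intro hr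
    unfold aspaRatio at hr
    field_simp at hr
    apply aspa_int_ne N m hN
    have hR : (((2 * (N:ℝ) - 1) ^ 2 * m + N * (N + 1)) * (N + 1) : ℝ)
        = ((2 * (N:ℝ) - 1) * ((N:ℝ) + 1) ^ 2) * (N + 1) := by linear_combination ((N:ℝ) + 1) * hr
    have hZ : ((2 * N - 1) ^ 2 * m + N * (N + 1)) * (N + 1)
        = ((2 * N - 1) * (N + 1) ^ 2) * (N + 1) := by exact_mod_cast hR
    have hN1 : (N + 1 : ℤ) ≠ 0 := by omega
    exact mul_right_cancel₀ hN1 hZ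
  refine ⟨hr, fun h hh hhe => hr ?_⟩
  have := mul_right_cancel₀ (ne_of_gt hh) (by rw [one_mul]; exact hhe :
    aspaRatio N m * h = 1 * h)
  exact this
end

section
/- For every integer N ≥ 2, the stepsize ratio when all processors are successful, r(N,N) = N(2N−1)/(N+1)² + N/((2N−1)(N+1)), satisfies 3/4 < r(N,N) < 2. -/
/-- For every integer `N ≥ 2`, the stepsize ratio when all processors are
successful, `r(N,N) = N(2N−1)/(N+1)² + N/((2N−1)(N+1))`, satisfies
`3/4 < r(N,N) < 2`. -/
theorem aspaRatio_full_bounds (N : ℤ) (hN : 2 ≤ N) :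
    3 / 4 < (N : ℝ) * (2 * (N : ℝ) - 1) / ((N : ℝ) + 1) ^ 2 +
      (N : ℝ) / ((2 * (N : ℝ) - 1) * ((N : ℝ) + 1)) ∧
    (N : ℝ) * (2 * (N : ℝ) - 1) / ((N : ℝ) + 1) ^ 2 +
      (N : ℝ) / ((2 * (N : ℝ) - 1) * ((N : ℝ) + 1)) < 2 := by
  have hx : (2 : ℝ) ≤ (N : ℝ) := by exact_mod_cast hN
  set x : ℝ := (N : ℝ)
  have h1 : (0 : ℝ) < (x + 1) ^ 2 := by nlinarith
  have h2 : (0 : ℝ) < (2 * x - 1) * (x + 1) := by nlinarith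
  constructor
  · rw [div_add_div _ _ (ne_of_gt h1) (ne_of_gt h2), lt_div_iff₀ (by positivity)]
    nlinarith [sq_nonneg (x - 2), sq_nonneg x]
  · rw [div_add_div _ _ (ne_of_gt h1) (ne_of_gt h2), div_lt_iff₀ (by positivity)]
    nlinarith [sq_nonneg (x - 2), sq_nonneg x]
end
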